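/- Let f : Y → X be a continuous surjective map of topological spaces such that every fiber f⁻¹(x) is connected, and assume f admits local sections through every point (e.g. f is a quotient map). If Y is path-connected and locally path-connected, then the induced homomorphism f_* : π₁(Y, y₀) → π₁(X, f(y₀)) is surjective. -/

import Mathlib

open Topology Topology.Homotopy unitInterval in
/-- The map on homotopy groups induced by a continuous map. -/
noncomputable def piInduced {X Y : Type*} [TopologicalSpace X] [TopologicalSpace Y]
    (f : C(X, Y)) (n : ℕ) (x : X) : π_ n X x → π_ n Y (f x) :=
  Quotient.map
    (fun g => ⟨f.comp g.1, fun y hy => by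
      simp only [ContinuousMap.comp_apply, g.2 y hy]⟩)
    (fun g h H => H.map (fun F => F.compContinuousMap f))


open unitInterval

namespace Stmt3Aux

variable {X Y : Type*} [TopologicalSpace X] [TopologicalSpace Y]

/-- Homotopy-rel-endpoints equivalence of paths whose endpoints agree only propositionally. -/
def HEqv {a b a' b' : X} (p : Path a b) (q : Path a' b') : Prop :=
  ∃ (h1 : a = a') (h2 : b = b'), p.Homotopic (q.cast h1 h2)

theorem homotopic_of_eq {a b : X} {p q : Path a b} (h : p = q) : p.Homotopic q :=
  h ▸ Path.Homotopic.refl p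

theorem cast_rfl_rfl {a b : X} (p : Path a b) : p.cast rfl rfl = p := by
  ext t; rw [Path.cast_coe]

theorem HEqv.of_homotopic {a b : X} {p q : Path a b} (h : p.Homotopic q) : HEqv p q :=
  ⟨rfl, rfl, by rwa [cast_rfl_rfl]⟩

theorem HEqv.refl {a b : X} (p : Path a b) : HEqv p p :=
  .of_homotopic (Path.Homotopic.refl p)

theorem HEqv.symm {a b a' b' : X} {p : Path a b} {q : Path a' b'} (h : HEqv p q) : HEqv q p := by
  obtain ⟨h1, h2, h⟩ := h
  subst h1; subst h2
  exact ⟨rfl, rfl, by rw [cast_rfl_rfl] at h ⊢; exact h.symm⟩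

theorem HEqv.trans {a b a' b' a'' b'' : X} {p : Path a b} {q : Path a' b'} {r : Path a'' b''}
    (h : HEqv p q) (h' : HEqv q r) : HEqv p r := by
  obtain ⟨h1, h2, h⟩ := h
  subst h1; subst h2
  obtain ⟨h1', h2', h'⟩ := h'
  subst h1'; subst h2'
  rw [cast_rfl_rfl] at h h'
  exact ⟨rfl, rfl, by rw [cast_rfl_rfl]; exact h.trans h'⟩

theorem HEqv.of_forall {a b a' b' : X} (p : Path a b) (q : Path a' b') (h : ∀ t, p t = q t) :
    HEqv p q := by
  have h1 : a = a' := by rw [← p.source, ← q.source, h]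
  have h2 : b = b' := by rw [← p.target, ← q.target, h]
  subst h1; subst h2
  exact .of_homotopic (homotopic_of_eq (by ext t; exact h t))

theorem HEqv.transCongr {a b c a' b' c' : X} {p : Path a b} {q : Path b c}
    {p' : Path a' b'} {q' : Path b' c'} (h : HEqv p p') (h' : HEqv q q') :
    HEqv (p.trans q) (p'.trans q') := by
  obtain ⟨h1, h2, h⟩ := h
  subst h1; subst h2
  obtain ⟨h1', h2', h'⟩ := h'
  have : h1' = rfl := rfl
  subst h2'
  rw [cast_rfl_rfl] at h h'
  exact .of_homotopic (h.hcomp h')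

theorem HEqv.symmCongr {a b a' b' : X} {p : Path a b} {q : Path a' b'} (h : HEqv p q) :
    HEqv p.symm q.symm := by
  obtain ⟨h1, h2, h⟩ := h
  subst h1; subst h2
  rw [cast_rfl_rfl] at h
  obtain ⟨H⟩ := h
  exact ⟨rfl, rfl, by rw [cast_rfl_rfl]; exact ⟨H.symm₂⟩⟩

theorem HEqv.trans_refl {a b : X} (p : Path a b) : HEqv (p.trans (Path.refl b)) p :=
  .of_homotopic ⟨Path.Homotopy.transRefl p⟩

theorem HEqv.refl_trans {a b : X} (p : Path a b) : HEqv ((Path.refl a).trans p) p :=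
  .of_homotopic ⟨Path.Homotopy.reflTrans p⟩

theorem HEqv.trans_symm {a b : X} (p : Path a b) : HEqv (p.trans p.symm) (Path.refl a) :=
  .of_homotopic ⟨(Path.Homotopy.reflTransSymm p).symm⟩

theorem HEqv.symm_trans {a b : X} (p : Path a b) : HEqv (p.symm.trans p) (Path.refl b) :=
  .of_homotopic ⟨(Path.Homotopy.reflSymmTrans p).symm⟩

theorem HEqv.assoc {a b c d : X} (p : Path a b) (q : Path b c) (r : Path c d) :
    HEqv ((p.trans q).trans r) (p.trans (q.trans r)) :=
  .of_homotopic ⟨Path.Homotopy.transAssoc p q r⟩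

theorem HEqv.cast {a b a' b' : X} (p : Path a b) (h1 : a' = a) (h2 : b' = b) :
    HEqv (p.cast h1 h2) p := by
  subst h1; subst h2; rw [cast_rfl_rfl]; exact .refl p



/-- Two paths given by `p.extend ∘ φᵢ` for continuous `φᵢ` agreeing at the endpoints are
homotopic (straight-line homotopy in the parameter). -/
theorem hEqv_of_extend {a b c d c' d' : X} (p : Path a b) (q : Path c d) (r : Path c' d')
    (φ₀ φ₁ : I → ℝ) (hφ₀ : Continuous φ₀) (hφ₁ : Continuous φ₁)
    (hq : ∀ s, q s = p.extend (φ₀ s)) (hr : ∀ s, r s = p.extend (φ₁ s))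
    (h0 : φ₀ 0 = φ₁ 0) (h1 : φ₀ 1 = φ₁ 1) : HEqv q r := by
  have hc : c = c' := by
    rw [← q.source, ← r.source, hq, hr, h0]
  have hd : d = d' := by
    rw [← q.target, ← r.target, hq, hr, h1]
  subst hc; subst hd
  refine .of_homotopic ⟨?_⟩
  have key : ∀ u : I, (1 - (u:ℝ)) * φ₀ 0 + u * φ₁ 0 = φ₀ 0 := by
    intro u; rw [h0]; ring
  have key1 : ∀ u : I, (1 - (u:ℝ)) * φ₀ 1 + u * φ₁ 1 = φ₀ 1 := by
    intro u; rw [h1]; ring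
  refine ⟨⟨⟨fun x => p.extend ((1 - (x.1:ℝ)) * φ₀ x.2 + x.1 * φ₁ x.2), ?_⟩, ?_, ?_⟩, ?_⟩
  · exact p.continuous_extend.comp (by fun_prop)
  · intro s
    show p.extend ((1 - ((0:I):ℝ)) * φ₀ s + ((0:I):ℝ) * φ₁ s) = q s
    rw [show ((0:I):ℝ) = 0 from rfl]
    rw [show (1 - (0:ℝ)) * φ₀ s + 0 * φ₁ s = φ₀ s by ring, ← hq]
  · intro s
    show p.extend ((1 - ((1:I):ℝ)) * φ₀ s + ((1:I):ℝ) * φ₁ s) = r s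
    rw [show ((1:I):ℝ) = 1 from rfl]
    rw [show (1 - (1:ℝ)) * φ₀ s + 1 * φ₁ s = φ₁ s by ring, ← hr]
  · intro u t ht
    rcases ht with ht | ht
    · subst ht
      show p.extend ((1 - (u:ℝ)) * φ₀ 0 + u * φ₁ 0) = q 0
      rw [key u, ← hq 0]
    · subst ht
      show p.extend ((1 - (u:ℝ)) * φ₀ 1 + u * φ₁ 1) = q 1
      rw [key1 u, ← hq 1]

end Stmt3Aux

namespace Stmt3Aux
variable {X : Type*} [TopologicalSpace X]

theorem truncate_apply {a b : X} (γ : Path a b) (t₀ t₁ : ℝ) (s : I) :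
    γ.truncate t₀ t₁ s = γ.extend (min (max ↑s t₀) t₁) := rfl

theorem trunc_split {a b : X} (γ : Path a b) {t₁ t₂ : ℝ}
    (h0 : 0 ≤ t₁) (h12 : t₁ ≤ t₂) (h1 : t₂ ≤ 1) :
    HEqv ((γ.truncate 0 t₁).trans
        ((γ.truncate t₁ t₂).cast (show γ.extend t₁ = γ.extend (min t₁ t₂) by rw [min_eq_left h12]) rfl))
      (γ.truncate 0 t₂) := by
  have ht₁1 : t₁ ≤ 1 := h12.trans h1
  refine hEqv_of_extend γ _ _
    (fun s => if (s:ℝ) ≤ 1/2 then min (max (2*(s:ℝ)) 0) t₁ else min (max (2*(s:ℝ)-1) t₁) t₂)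
    (fun s => min (max (s:ℝ) 0) t₂) ?_ ?flip ?_ (fun s => rfl) ?_ ?_
  case flip => fun_prop
  · apply continuous_if_le (by fun_prop) (by fun_prop)
      (Continuous.continuousOn (by fun_prop)) (Continuous.continuousOn (by fun_prop))
    intro s hs
    rw [hs]
    norm_num
    rw [min_eq_right ht₁1, max_eq_right h0, min_eq_left h12]
  · intro s
    rw [Path.trans_apply]
    split_ifs with h
    · rfl
    · rw [Path.cast_coe]; rfl
  · norm_num
    rw [min_eq_left h0, min_eq_left (h0.trans h12)]
  · norm_num
    rw [max_eq_left ht₁1]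
end Stmt3Aux

namespace Stmt3Aux
open Set
variable {Y X : Type*} [TopologicalSpace Y] [TopologicalSpace X]

theorem fiber_reach (f : C(Y, X))
    (hfibers : ∀ x : X, IsConnected (f ⁻¹' {x}))
    (hlocsec : ∀ y : Y, ∃ (V : Set X) (hV : IsOpen V) (hmem : f y ∈ V) (s : C(V, Y)),
      (∀ v : V, f (s v) = v) ∧ s ⟨f y, hmem⟩ = y)
    [LocallyPathConnectedSpace Y]
    (y y' : Y) (hyy' : f y = f y') :
    ∃ β : Path y y', HEqv (β.map f.continuous) (Path.refl (f y)) := by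
  set x := f y with hx
  have local_rel : ∀ c : Y, f c = x → ∃ O : Set Y, IsOpen O ∧ c ∈ O ∧
      ∀ c' ∈ O, f c' = x → ∃ β : Path c c', HEqv (β.map f.continuous) (Path.refl x) := by
    intro c hc
    obtain ⟨V, hV, hmem, s, hs, hsc⟩ := hlocsec c
    refine ⟨pathComponentIn (f ⁻¹' V) c, (hV.preimage f.continuous).pathComponentIn c,
      mem_pathComponentIn_self hmem, ?_⟩
    intro c' hc' hfc'
    obtain ⟨α, hα⟩ : JoinedIn (f ⁻¹' V) c c' := hc'
    have hfc : f c' = f c := by rw [hfc', hc]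
    let v₀ : V := ⟨f c, hmem⟩
    let αV : Path v₀ v₀ :=
      ⟨⟨fun t => ⟨f (α t), hα t⟩, by fun_prop⟩,
        Subtype.ext (by simp [v₀]), Subtype.ext (by simp [v₀, hfc])⟩
    have hsv : s v₀ = c := hsc
    let δ' : Path c c := (αV.map s.continuous).cast hsv.symm hsv.symm
    let A : Path (f c) (f c') := α.map f.continuous
    have hδA : HEqv (δ'.map f.continuous) A := by
      refine HEqv.of_forall _ _ fun t => ?_
      show f ((αV.map s.continuous).cast hsv.symm hsv.symm t) = f (α t)
      rw [Path.cast_coe]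
      exact hs _
    refine ⟨δ'.symm.trans α, ?_⟩
    have h1 : (δ'.symm.trans α).map f.continuous
        = (δ'.symm.map f.continuous).trans A := Path.map_trans _ _ _
    have h2 : δ'.symm.map f.continuous = (δ'.map f.continuous).symm := (Path.map_symm _ _).symm
    rw [h1, h2]
    refine HEqv.trans (HEqv.transCongr (HEqv.symmCongr hδA) (HEqv.refl A)) ?_
    refine HEqv.trans (HEqv.symm_trans A) ?_
    exact HEqv.of_forall _ _ fun t => hfc'
  -- clopen argument in the fiber
  haveI : ConnectedSpace (f ⁻¹' {x} : Set Y) := Subtype.connectedSpace (hfibers x)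
  set T : Set (f ⁻¹' {x} : Set Y) :=
    {c | ∃ β : Path y c.1, HEqv (β.map f.continuous) (Path.refl x)} with hT
  have hyF : y ∈ f ⁻¹' {x} := rfl
  have hne : T.Nonempty := by
    refine ⟨⟨y, hyF⟩, Path.refl y, HEqv.of_forall _ _ fun t => rfl⟩
  have hopen : IsOpen T := by
    rw [isOpen_iff_forall_mem_open]
    rintro ⟨c, hcF⟩ ⟨β, hβ⟩
    obtain ⟨O, hO, hcO, hrel⟩ := local_rel c hcF
    refine ⟨Subtype.val ⁻¹' O, ?_, hO.preimage continuous_subtype_val, hcO⟩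
    rintro ⟨c', hc'F⟩ hc'O
    obtain ⟨β₂, hβ₂⟩ := hrel c' hc'O hc'F
    exact ⟨β.trans β₂, by
      rw [Path.map_trans]
      exact HEqv.trans (HEqv.transCongr hβ hβ₂) (HEqv.trans_refl _)⟩
  have hclosed : IsClosed T := by
    rw [← isOpen_compl_iff, isOpen_iff_forall_mem_open]
    rintro ⟨c, hcF⟩ hcT
    obtain ⟨O, hO, hcO, hrel⟩ := local_rel c hcF
    refine ⟨Subtype.val ⁻¹' O, ?_, hO.preimage continuous_subtype_val, hcO⟩
    rintro ⟨c', hc'F⟩ hc'O ⟨β', hβ'⟩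
    obtain ⟨β₂, hβ₂⟩ := hrel c' hc'O hc'F
    refine hcT ⟨β'.trans β₂.symm, ?_⟩
    rw [Path.map_trans, ← Path.map_symm]
    refine HEqv.trans (HEqv.transCongr hβ' (HEqv.symmCongr hβ₂)) ?_
    refine HEqv.trans ?_ (HEqv.trans_refl (Path.refl x))
    exact HEqv.transCongr (HEqv.refl _) (HEqv.of_forall _ _ fun t => rfl)
  have := IsClopen.eq_univ (s := T) ⟨hclosed, hopen⟩ hne
  have hy'F : y' ∈ f ⁻¹' {x} := by simp [hyy'.symm]
  have : (⟨y', hy'F⟩ : (f ⁻¹' {x} : Set Y)) ∈ T := this ▸ mem_univ _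
  exact this

end Stmt3Aux

namespace Stmt3Aux
open Set unitInterval
variable {Y X : Type*} [TopologicalSpace Y] [TopologicalSpace X]

theorem loop_lift (f : C(Y, X)) (hsurj : Function.Surjective f)
    (hfibers : ∀ x : X, IsConnected (f ⁻¹' {x}))
    (hlocsec : ∀ y : Y, ∃ (V : Set X) (hV : IsOpen V) (hmem : f y ∈ V) (s : C(V, Y)),
      (∀ v : V, f (s v) = v) ∧ s ⟨f y, hmem⟩ = y)
    [LocallyPathConnectedSpace Y] (y₀ : Y) (γ : Path (f y₀) (f y₀)) :
    ∃ L : Path y₀ y₀, HEqv (L.map f.continuous) γ := by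
  have hlocsec' : ∀ y : Y, ∃ (V : Set X) (_ : IsOpen V) (_ : f y ∈ V) (s : C(V, Y)),
      (∀ v : V, f (s v) = v) := by
    intro y; obtain ⟨V, hV, hmem, s, hs, -⟩ := hlocsec y; exact ⟨V, hV, hmem, s, hs⟩
  set S : Set I := {t | ∃ (y : Y) (L : Path y₀ y),
    HEqv (L.map f.continuous) (γ.truncate 0 (t:ℝ))} with hS
  have step : ∀ (t₁ t₂ : I), (t₁:ℝ) ≤ (t₂:ℝ) → ∀ (V : Set X) (s : C(V, Y)),
      (∀ v : V, f (s v) = v) → (∀ u : ℝ, (t₁:ℝ) ≤ u → u ≤ (t₂:ℝ) → γ.extend u ∈ V) →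
      ((t₁ ∈ S → t₂ ∈ S) ∧ (t₂ ∈ S → t₁ ∈ S)) := by
    intro t₁ t₂ h12 V s hs hseg
    have h0 : (0:ℝ) ≤ (t₁:ℝ) := t₁.2.1
    have h1 : (t₂:ℝ) ≤ 1 := t₂.2.2
    set M : Path (γ.extend (t₁:ℝ)) (γ.extend (t₂:ℝ)) :=
      (γ.truncate (t₁:ℝ) (t₂:ℝ)).cast
        (show γ.extend (t₁:ℝ) = γ.extend (min (t₁:ℝ) (t₂:ℝ)) by rw [min_eq_left h12]) rfl
      with hM
    have hMmem : ∀ u : I, M u ∈ V := by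
      intro u
      rw [hM, Path.cast_coe, truncate_apply]
      exact hseg _ (le_min (le_max_right _ _) h12) (min_le_right _ _)
    set ρ : Path (⟨γ.extend (t₁:ℝ), hseg _ le_rfl h12⟩ : V)
        (⟨γ.extend (t₂:ℝ), hseg _ h12 le_rfl⟩ : V) :=
      ⟨⟨fun u => ⟨M u, hMmem u⟩, by fun_prop⟩,
        Subtype.ext M.source, Subtype.ext M.target⟩ with hρ
    set δ := ρ.map s.continuous with hδ
    have hδM : HEqv (δ.map f.continuous) M := HEqv.of_forall _ _ fun u => hs (ρ u)
    have hsplit : HEqv ((γ.truncate 0 (t₁:ℝ)).trans M) (γ.truncate 0 (t₂:ℝ)) :=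
      trunc_split γ h0 h12 h1
    constructor
    · rintro ⟨y, L, hL⟩
      have hy : f y = γ.extend (t₁:ℝ) := by
        obtain ⟨-, h2, -⟩ := hL; exact h2
      obtain ⟨β, hβ⟩ := fiber_reach f hfibers hlocsec y (s ⟨γ.extend (t₁:ℝ), hseg _ le_rfl h12⟩)
        (by rw [hy, hs])
      refine ⟨_, (L.trans β).trans δ, ?_⟩
      rw [Path.map_trans, Path.map_trans]
      have E1 : HEqv ((L.map f.continuous).trans (β.map f.continuous))
          ((γ.truncate 0 (t₁:ℝ)).trans (Path.refl (γ.extend (t₁:ℝ)))) :=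
        HEqv.transCongr hL (HEqv.trans hβ
          (HEqv.of_forall (Path.refl (f y)) (Path.refl (γ.extend (t₁:ℝ))) fun _ => hy))
      refine HEqv.trans (HEqv.transCongr (HEqv.trans E1 (HEqv.trans_refl _)) hδM) hsplit
    · rintro ⟨y, L, hL⟩
      have hy : f y = γ.extend (t₂:ℝ) := by
        obtain ⟨-, h2, -⟩ := hL; exact h2
      obtain ⟨β, hβ⟩ := fiber_reach f hfibers hlocsec y (s ⟨γ.extend (t₂:ℝ), hseg _ h12 le_rfl⟩)
        (by rw [hy, hs])
      refine ⟨_, (L.trans β).trans δ.symm, ?_⟩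
      rw [Path.map_trans, Path.map_trans, ← Path.map_symm]
      have E1 : HEqv ((L.map f.continuous).trans (β.map f.continuous))
          (γ.truncate 0 (t₂:ℝ)) :=
        HEqv.trans (HEqv.transCongr hL (HEqv.trans hβ
          (HEqv.of_forall (Path.refl (f y)) (Path.refl (γ.extend (t₂:ℝ))) fun _ => hy)))
          (HEqv.trans_refl _)
      refine HEqv.trans (HEqv.transCongr E1 (HEqv.symmCongr hδM)) ?_
      refine HEqv.trans (HEqv.transCongr (HEqv.symm hsplit) (HEqv.refl M.symm)) ?_
      refine HEqv.trans (HEqv.assoc _ _ _) ?_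
      refine HEqv.trans (HEqv.transCongr (HEqv.refl _) (HEqv.trans_symm M)) ?_
      exact HEqv.trans_refl _
  have transfer : ∀ t : I, ∃ U : Set I, IsOpen U ∧ t ∈ U ∧ ∀ t' ∈ U, (t ∈ S ↔ t' ∈ S) := by
    intro t
    obtain ⟨yt, hyt⟩ := hsurj (γ t)
    obtain ⟨V, hV, hmem, s, hs, -⟩ := hlocsec yt
    have hγt : t ∈ ⇑γ ⁻¹' V := by rw [Set.mem_preimage, ← hyt]; exact hmem
    obtain ⟨ε, hε, hball⟩ := Metric.isOpen_iff.mp (hV.preimage γ.continuous_toFun) t hγt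
    refine ⟨Metric.ball t ε, Metric.isOpen_ball, Metric.mem_ball_self hε, ?_⟩
    intro t' ht'
    have hdist : |(t':ℝ) - (t:ℝ)| < ε := by
      rw [Metric.mem_ball, Subtype.dist_eq, Real.dist_eq] at ht'
      exact ht'
    have hseg : ∀ u : ℝ, |u - (t:ℝ)| ≤ |(t':ℝ) - (t:ℝ)| → (0:ℝ) ≤ u → u ≤ 1 →
        γ.extend u ∈ V := by
      intro u hu h0u hu1
      have humem : (⟨u, h0u, hu1⟩ : I) ∈ Metric.ball t ε := by
        rw [Metric.mem_ball, Subtype.dist_eq, Real.dist_eq]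
        exact lt_of_le_of_lt hu hdist
      have := hball humem
      rw [Path.extend_apply γ ⟨h0u, hu1⟩]
      exact this
    rcases le_total (t':ℝ) (t:ℝ) with h | h
    · have hst := step t' t h V s hs (by
        intro u h1 h2
        refine hseg u ?_ (le_trans t'.2.1 h1) (le_trans h2 t.2.2)
        rw [abs_of_nonpos (by linarith), abs_of_nonpos (by linarith)]
        linarith)
      exact ⟨hst.2, hst.1⟩
    · have hst := step t t' h V s hs (by
        intro u h1 h2
        refine hseg u ?_ (le_trans t.2.1 h1) (le_trans h2 t'.2.2)
        rw [abs_of_nonneg (by linarith), abs_of_nonneg (by linarith)]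
        linarith)
      exact ⟨hst.1, hst.2⟩
  have h0S : (0:I) ∈ S := by
    refine ⟨y₀, Path.refl y₀, HEqv.of_forall _ _ fun u => ?_⟩
    show f y₀ = γ.extend (min (max (u:ℝ) ((0:I):ℝ)) ((0:I):ℝ))
    rw [show ((0:I):ℝ) = 0 from rfl, max_eq_left u.2.1, min_eq_right u.2.1, γ.extend_zero]
  have hSopen : IsOpen S := by
    rw [isOpen_iff_forall_mem_open]
    intro t ht
    obtain ⟨U, hU, htU, hiff⟩ := transfer t
    exact ⟨U, fun t' ht' => (hiff t' ht').mp ht, hU, htU⟩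
  have hSclosed : IsClosed S := by
    rw [← isOpen_compl_iff, isOpen_iff_forall_mem_open]
    intro t ht
    obtain ⟨U, hU, htU, hiff⟩ := transfer t
    exact ⟨U, fun t' ht' ht'S => ht ((hiff t' ht').mpr ht'S), hU, htU⟩
  haveI : ConnectedSpace I := Subtype.connectedSpace
    ⟨⟨0, by simp⟩, isPreconnected_Icc⟩
  have hSuniv : S = Set.univ := IsClopen.eq_univ ⟨hSclosed, hSopen⟩ ⟨0, h0S⟩
  have h1S : (1:I) ∈ S := hSuniv ▸ Set.mem_univ _
  obtain ⟨y, L, hL⟩ := h1S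
  have hy : f y = γ.extend ((1:I):ℝ) := by obtain ⟨-, h2, -⟩ := hL; exact h2
  have hyy₀ : f y = f y₀ := by
    rw [hy, show ((1:I):ℝ) = 1 from rfl, γ.extend_one]
  obtain ⟨β, hβ⟩ := fiber_reach f hfibers hlocsec y y₀ hyy₀
  refine ⟨L.trans β, ?_⟩
  rw [Path.map_trans]
  have htr : HEqv (γ.truncate 0 ((1:I):ℝ)) γ := by
    refine HEqv.of_forall _ _ fun u => ?_
    show γ.extend (min (max (u:ℝ) 0) ((1:I):ℝ)) = γ u
    rw [show ((1:I):ℝ) = 1 from rfl, max_eq_left u.2.1, min_eq_left u.2.2,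
      Path.extend_apply γ ⟨u.2.1, u.2.2⟩]
  refine HEqv.trans (HEqv.transCongr (HEqv.trans hL htr)
    (HEqv.trans hβ (HEqv.of_forall (Path.refl (f y)) (Path.refl (f y₀)) fun _ => hyy₀))) ?_
  exact HEqv.trans_refl γ

end Stmt3Aux


open Topology in
/-- a continuous surjection with connected fibers admitting local sections
through every point, from a path-connected, locally path-connected space, induces a
surjection on fundamental groups. -/
theorem statement3 {Y X : Type*} [TopologicalSpace Y] [TopologicalSpace X]
    (f : C(Y, X)) (hsurj : Function.Surjective f)
    (hfibers : ∀ x : X, IsConnected (f ⁻¹' {x}))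
    (hlocsec : ∀ y : Y, ∃ (V : Set X) (hV : IsOpen V) (hmem : f y ∈ V) (s : C(V, Y)),
      (∀ v : V, f (s v) = v) ∧ s ⟨f y, hmem⟩ = y)
    [PathConnectedSpace Y] [LocallyPathConnectedSpace Y]
    (y₀ : Y) :
    Function.Surjective (piInduced f 1 y₀) := by
  intro q
  obtain ⟨g, rfl⟩ := Quotient.exists_rep q
  -- the loop in X corresponding to `g`
  set γ : Path (f y₀) (f y₀) :=
    ⟨⟨fun t => g.1 (fun _ => t), g.1.continuous.comp (continuous_pi fun _ => continuous_id)⟩,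
      g.2 (fun _ => 0) ⟨0, Or.inl rfl⟩, g.2 (fun _ => 1) ⟨0, Or.inr rfl⟩⟩ with hγ
  obtain ⟨L, h1, h2, hh⟩ := Stmt3Aux.loop_lift f hsurj hfibers hlocsec y₀ γ
  obtain ⟨H⟩ := hh
  -- the generalized loop in Y corresponding to `L`
  refine ⟨⟦⟨⟨fun c => L (c 0), L.continuous.comp (continuous_apply 0)⟩, ?_⟩⟧, ?_⟩
  · rintro c ⟨i, hi⟩
    have hi0 : c 0 = 0 ∨ c 0 = 1 := by
      rwa [Subsingleton.elim (0 : Fin 1) i]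
    rcases hi0 with h | h <;> simp only [ContinuousMap.coe_mk, h, L.source, L.target]
  · show Quotient.map _ _ _ = _
    refine Quotient.sound ⟨⟨⟨⟨fun p => H (p.1, p.2 0), ?_⟩, ?_, ?_⟩, ?_⟩⟩
    · exact H.continuous.comp (continuous_fst.prodMk ((continuous_apply 0).comp continuous_snd))
    · intro c
      show H (0, c 0) = f (L (c 0))
      rw [H.apply_zero]
      rfl
    · intro c
      show H (1, c 0) = g.1 c
      rw [H.apply_one]
      have hc : c = fun _ => c 0 := funext fun i => congrArg c (Subsingleton.elim i 0)
      calc ((γ.cast h1 h2)) (c 0) = γ (c 0) := by rw [Path.cast_coe]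
        _ = g.1 (fun _ => c 0) := rfl
        _ = g.1 c := by rw [← hc]
    · rintro t c ⟨i, hi⟩
      have hi0 : c 0 = 0 ∨ c 0 = 1 := by
        rwa [Subsingleton.elim (0 : Fin 1) i]
      have hmem : c 0 ∈ ({0, 1} : Set unitInterval) := by
        rcases hi0 with h | h <;> rw [h] <;> simp
      show H (t, c 0) = f (L (c 0))
      rw [H.eq_fst t hmem]
      rfl
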